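/- Let p : (0,1) → [1,∞) be nondecreasing with p(1) < ∞. Then the following two conditions are equivalent: (i) there exists C > 0 such that ∫_a^1 x^{-1/p'(x)} dx/x ≤ C a^{-1/p'(a)} for all a ∈ (0,1); (ii) there exist ε > 0 and C₁ > 0 such that t₂^{-1/p'(t₂)+ε} ≤ C₁ t₁^{-1/p'(t₁)+ε} for all 0 < t₁ ≤ t₂ < 1. -/

import Mathlib

open MeasureTheory Set Real

namespace Stmt19

variable {p : ℝ → ℝ}

lemma beta_mem (hp1 : ∀ x ∈ Set.Ioc (0:ℝ) 1, 1 ≤ p x) {x : ℝ}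
    (hx : x ∈ Set.Ioc (0:ℝ) 1) : 0 ≤ 1 - 1 / p x ∧ 1 - 1 / p x ≤ 1 := by
  have h1 := hp1 x hx
  have hpos : 0 < p x := by linarith
  constructor
  · have : 1 / p x ≤ 1 := by rw [div_le_one hpos]; exact h1
    linarith
  · have : 0 ≤ 1 / p x := by positivity
    linarith

lemma beta_mono (hmono : MonotoneOn p (Set.Ioc 0 1))
    (hp1 : ∀ x ∈ Set.Ioc (0:ℝ) 1, 1 ≤ p x) {x y : ℝ}
    (hx : x ∈ Set.Ioc (0:ℝ) 1) (hy : y ∈ Set.Ioc (0:ℝ) 1) (hxy : x ≤ y) :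
    1 - 1 / p x ≤ 1 - 1 / p y := by
  have hpx := hp1 x hx
  have h := hmono hx hy hxy
  have : 1 / p y ≤ 1 / p x := one_div_le_one_div_of_le (by linarith) h
  linarith

/-- pointwise upper bound -/
lemma f_le {a x β : ℝ} (ha : 0 < a) (hax : a < x) (hx1 : x ≤ 1) (hβ : β ≤ 1) :
    x ^ (-β) / x ≤ 1 / (a * a) := by
  have hx0 : 0 < x := ha.trans hax
  have h1 : x ^ (-β) ≤ x ^ (-1 : ℝ) :=
    Real.rpow_le_rpow_of_exponent_ge hx0 hx1 (by linarith)
  rw [Real.rpow_neg_one] at h1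
  calc x ^ (-β) / x ≤ x⁻¹ / x := by gcongr
    _ = 1 / (x * x) := by field_simp
    _ ≤ 1 / (a * a) := by
        apply one_div_le_one_div_of_le (by positivity)
        exact mul_le_mul hax.le hax.le ha.le hx0.le

lemma integrableOn_f (hmono : MonotoneOn p (Set.Ioc 0 1))
    (hp1 : ∀ x ∈ Set.Ioc (0:ℝ) 1, 1 ≤ p x) {a : ℝ} (ha : 0 < a) :
    IntegrableOn (fun x => x ^ (-(1 - 1 / p x)) / x) (Set.Ioc a 1) := by
  rcases le_or_gt 1 a with h | h
  · rw [Set.Ioc_eq_empty (by exact fun hlt => absurd h (not_le.mpr hlt))]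
    exact integrableOn_empty
  · set g : ℝ → ℝ := fun x => p (max a (min x 1)) with hgdef
    have hmem : ∀ x : ℝ, max a (min x 1) ∈ Set.Ioc (0:ℝ) 1 := fun x =>
      ⟨lt_of_lt_of_le ha (le_max_left _ _), max_le h.le (min_le_right _ _)⟩
    have hgmono : Monotone g := by
      intro x y hxy
      exact hmono (hmem x) (hmem y)
        (max_le_max le_rfl (min_le_min_right _ hxy))
    have h1 : Measurable fun x => -(1 - 1 / g x) :=
      (measurable_const.sub (measurable_const.div hgmono.measurable)).neg
    have hFm : Measurable fun x => x ^ (-(1 - 1 / g x)) / x :=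
      (measurable_id.pow h1).div measurable_id
    have hF : IntegrableOn (fun x => x ^ (-(1 - 1 / g x)) / x) (Set.Ioc a 1) := by
      apply Measure.integrableOn_of_bounded (M := 1 / (a * a))
        measure_Ioc_lt_top.ne hFm.aestronglyMeasurable
      rw [ae_restrict_iff' measurableSet_Ioc]
      refine ae_of_all _ fun x hx => ?_
      have hb := (beta_mem hp1 (hmem x)).2
      have hfx0 : 0 ≤ x ^ (-(1 - 1 / g x)) / x :=
        div_nonneg (Real.rpow_nonneg (ha.trans hx.1).le _) (ha.trans hx.1).le
      rw [Real.norm_of_nonneg hfx0]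
      exact f_le ha hx.1 hx.2 hb
    apply hF.congr_fun _ measurableSet_Ioc
    intro x hx
    have : max a (min x 1) = x := by
      rw [min_eq_left hx.2, max_eq_right hx.1.le]
    simp only [hgdef, this]


/-- subset monotonicity of the integral -/
lemma integral_subset_le (hmono : MonotoneOn p (Set.Ioc 0 1))
    (hp1 : ∀ x ∈ Set.Ioc (0:ℝ) 1, 1 ≤ p x) {a : ℝ} (ha : 0 < a)
    {s : Set ℝ} (hs : s ⊆ Set.Ioc a 1) :
    ∫ x in s, x ^ (-(1 - 1 / p x)) / x ≤ ∫ x in Set.Ioc a 1, x ^ (-(1 - 1 / p x)) / x := by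
  apply setIntegral_mono_set (integrableOn_f hmono hp1 ha)
  · rw [Filter.EventuallyLE, ae_restrict_iff' measurableSet_Ioc]
    refine ae_of_all _ fun x hx => ?_
    exact div_nonneg (Real.rpow_nonneg (ha.trans hx.1).le _) (ha.trans hx.1).le
  · exact HasSubset.Subset.eventuallyLE hs

/-- key lower bound: ∫_{(a,2a]} f ≥ (1/4) a^{-β a} for 2a ≤ 1 -/
lemma lower_bound (hmono : MonotoneOn p (Set.Ioc 0 1))
    (hp1 : ∀ x ∈ Set.Ioc (0:ℝ) 1, 1 ≤ p x) {a : ℝ} (ha : 0 < a) (h2a : 2 * a ≤ 1) :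
    (1 / 4) * a ^ (-(1 - 1 / p a)) ≤ ∫ x in Set.Ioc a (2 * a), x ^ (-(1 - 1 / p x)) / x := by
  have ha1 : a ∈ Set.Ioc (0:ℝ) 1 := ⟨ha, by linarith⟩
  have h2apos : 0 < 2 * a := by linarith
  set β := 1 - 1 / p a with hβ
  have hβ0 : 0 ≤ β := (beta_mem hp1 ha1).1
  have hβ1 : β ≤ 1 := (beta_mem hp1 ha1).2
  set c : ℝ := (2 * a) ^ (-β - 1) with hc
  have step1 : ∫ x in Set.Ioc a (2 * a), c ≤ ∫ x in Set.Ioc a (2 * a), x ^ (-(1 - 1 / p x)) / x := by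
    apply setIntegral_mono_on (integrableOn_const measure_Ioc_lt_top.ne)
      ((integrableOn_f hmono hp1 ha).mono_set (Set.Ioc_subset_Ioc_right h2a))
      measurableSet_Ioc
    intro x hx
    have hx0 : 0 < x := ha.trans hx.1
    have hx1 : x ≤ 1 := hx.2.trans h2a
    have hxm : x ∈ Set.Ioc (0:ℝ) 1 := ⟨hx0, hx1⟩
    have hβx : β ≤ 1 - 1 / p x := beta_mono hmono hp1 ha1 hxm hx.1.le
    calc c ≤ x ^ (-β - 1) :=
          Real.rpow_le_rpow_of_nonpos hx0 hx.2 (by linarith)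
      _ ≤ x ^ (-(1 - 1 / p x) - 1) :=
          Real.rpow_le_rpow_of_exponent_ge hx0 hx1 (by linarith)
      _ = x ^ (-(1 - 1 / p x)) / x := by
          rw [Real.rpow_sub hx0, Real.rpow_one]
  have step2 : ∫ x in Set.Ioc a (2 * a), c = a * c := by
    rw [setIntegral_const, Real.volume_real_Ioc_of_le (by linarith), smul_eq_mul]
    congr 1
    ring
  have step3 : (1 / 4) * a ^ (-β) ≤ a * c := by
    have e1 : c = (2 * a) ^ (-β) / (2 * a) := by
      rw [hc, Real.rpow_sub h2apos, Real.rpow_one]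
    have e2 : (2 * a) ^ (-β) = 2 ^ (-β) * a ^ (-β) :=
      Real.mul_rpow (by norm_num) ha.le
    have e3 : (1/2 : ℝ) ≤ 2 ^ (-β) := by
      have := Real.rpow_le_rpow_of_exponent_le (x := 2) (by norm_num) (by linarith : (-1:ℝ) ≤ -β)
      rw [Real.rpow_neg_one] at this; linarith
    have ha' : 0 ≤ a ^ (-β) := Real.rpow_nonneg ha.le _
    rw [e1, e2]
    rw [show a * (2 ^ (-β) * a ^ (-β) / (2 * a)) = 2 ^ (-β) * a ^ (-β) / 2 by
      field_simp]
    nlinarith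
  calc (1/4) * a ^ (-β) ≤ a * c := step3
    _ = ∫ x in Set.Ioc a (2 * a), c := step2.symm
    _ ≤ _ := step1

/-- decomposition -/
lemma integral_split (hmono : MonotoneOn p (Set.Ioc 0 1))
    (hp1 : ∀ x ∈ Set.Ioc (0:ℝ) 1, 1 ≤ p x) {a b : ℝ} (ha : 0 < a) (hab : a ≤ b) (hb1 : b ≤ 1) :
    ∫ x in Set.Ioc a 1, x ^ (-(1 - 1 / p x)) / x
      = (∫ x in Set.Ioc a b, x ^ (-(1 - 1 / p x)) / x)
        + ∫ x in Set.Ioc b 1, x ^ (-(1 - 1 / p x)) / x := by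
  rw [← Set.Ioc_union_Ioc_eq_Ioc hab hb1]
  exact setIntegral_union (Set.Ioc_disjoint_Ioc_of_le le_rfl) measurableSet_Ioc
    ((integrableOn_f hmono hp1 ha).mono_set (Set.Ioc_subset_Ioc_right hb1))
    ((integrableOn_f hmono hp1 ha).mono_set (Set.Ioc_subset_Ioc_left hab))


section Iter

variable (hmono : MonotoneOn p (Set.Ioc 0 1))
    (hp1 : ∀ x ∈ Set.Ioc (0:ℝ) 1, 1 ≤ p x)
    {C : ℝ} (hC1 : 1 ≤ C)
    (hC : ∀ a ∈ Set.Ioo (0:ℝ) 1,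
      (∫ x in Set.Ioc a 1, x ^ (-(1 - 1 / p x)) / x) ≤ C * a ^ (-(1 - 1 / p a)))

include hmono hp1 hC1 hC

lemma step_lemma {a : ℝ} (ha : 0 < a) (h2a : 2 * a ≤ 1) :
    (∫ x in Set.Ioc (2 * a) 1, x ^ (-(1 - 1 / p x)) / x)
      ≤ (1 - 1 / (4 * C)) * ∫ x in Set.Ioc a 1, x ^ (-(1 - 1 / p x)) / x := by
  have haIoo : a ∈ Set.Ioo (0:ℝ) 1 := ⟨ha, by linarith⟩
  have hsplit := integral_split hmono hp1 ha (by linarith : a ≤ 2 * a) h2a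
  have hlow := lower_bound hmono hp1 ha h2a
  have hup := hC a haIoo
  have hCpos : (0:ℝ) < C := by linarith
  set I1 := ∫ x in Set.Ioc a 1, x ^ (-(1 - 1 / p x)) / x
  set I2 := ∫ x in Set.Ioc (2*a) 1, x ^ (-(1 - 1 / p x)) / x
  set J := ∫ x in Set.Ioc a (2*a), x ^ (-(1 - 1 / p x)) / x
  -- I1 = J + I2, J ≥ (1/4) a^{-β}, I1 ≤ C a^{-β}
  have key : I1 / (4 * C) ≤ J := by
    have : I1 / C ≤ a ^ (-(1 - 1 / p a)) := by
      rw [div_le_iff₀ hCpos]; linarith [hup]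
    calc I1 / (4 * C) = (1/4) * (I1 / C) := by ring
      _ ≤ (1/4) * a ^ (-(1 - 1 / p a)) := by linarith
      _ ≤ J := hlow
  have hd : I2 = I1 - J := by rw [hsplit]; ring
  rw [hd, show (1 - 1/(4*C)) * I1 = I1 - I1/(4*C) from by ring]
  linarith [key]

lemma iter_lemma (k : ℕ) {a : ℝ} (ha : 0 < a) (hk : 2 ^ k * a ≤ 1) :
    (∫ x in Set.Ioc (2 ^ k * a) 1, x ^ (-(1 - 1 / p x)) / x)
      ≤ (1 - 1 / (4 * C)) ^ k * ∫ x in Set.Ioc a 1, x ^ (-(1 - 1 / p x)) / x := by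
  induction k with
  | zero => simp
  | succ k ih =>
    have h2k : (0:ℝ) < 2 ^ k := by positivity
    have hle : (2:ℝ) ^ k * a ≤ 2 ^ (k+1) * a := by
      have : (2:ℝ) ^ k ≤ 2 ^ (k+1) := by
        apply pow_le_pow_right₀ (by norm_num) (by omega)
      nlinarith
    have hk' : 2 ^ k * a ≤ 1 := hle.trans hk
    have hstep := step_lemma hmono hp1 hC1 hC (a := 2 ^ k * a) (by positivity)
      (by rw [show 2 * (2 ^ k * a) = 2 ^ (k+1) * a by ring]; exact hk)
    rw [show 2 * (2 ^ k * a) = 2 ^ (k+1) * a by ring] at hstep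
    have hθ : (0:ℝ) ≤ 1 - 1 / (4 * C) := by
      have : 1 / (4 * C) ≤ 1 / 4 := by
        apply one_div_le_one_div_of_le <;> linarith
      linarith
    calc (∫ x in Set.Ioc (2 ^ (k+1) * a) 1, x ^ (-(1 - 1 / p x)) / x)
        ≤ (1 - 1/(4*C)) * ∫ x in Set.Ioc (2 ^ k * a) 1, x ^ (-(1 - 1 / p x)) / x := hstep
      _ ≤ (1 - 1/(4*C)) * ((1 - 1/(4*C)) ^ k * ∫ x in Set.Ioc a 1, x ^ (-(1 - 1 / p x)) / x) :=
          mul_le_mul_of_nonneg_left (ih hk') hθ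
      _ = (1 - 1/(4*C)) ^ (k+1) * ∫ x in Set.Ioc a 1, x ^ (-(1 - 1 / p x)) / x := by ring


end Iter

lemma theta_facts {C : ℝ} (hC1 : 1 ≤ C) :
    3/4 ≤ 1 - 1/(4*C) ∧ 1 - 1/(4*C) < 1 ∧ 0 < -Real.logb 2 (1 - 1/(4*C)) ∧
      -Real.logb 2 (1 - 1/(4*C)) ≤ 1 ∧ (2:ℝ) ^ (-(-Real.logb 2 (1 - 1/(4*C)))) = 1 - 1/(4*C) := by
  have h1 : (0:ℝ) < 1/(4*C) := by positivity
  have h2 : 1/(4*C) ≤ 1/4 := by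
    apply one_div_le_one_div_of_le <;> linarith
  have hθ0 : (0:ℝ) < 1 - 1/(4*C) := by linarith
  have hθ1 : 1 - 1/(4*C) < 1 := by linarith
  refine ⟨by linarith, hθ1, ?_, ?_, ?_⟩
  · have := Real.logb_neg (b := 2) (by norm_num) hθ0 hθ1
    linarith
  · -- ε ≤ 1 ⟺ -1 ≤ logb 2 θ ⟸ 1/2 ≤ θ
    have h3 : Real.logb 2 (1/2 : ℝ) ≤ Real.logb 2 (1 - 1/(4*C)) :=
      (Real.logb_le_logb (by norm_num) (by norm_num) hθ0).mpr (by linarith)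
    have h4 : Real.logb 2 (1/2 : ℝ) = -1 := by
      rw [show (1/2 : ℝ) = 2 ^ (-1 : ℝ) by rw [Real.rpow_neg_one]; norm_num]
      exact Real.logb_rpow (by norm_num) (by norm_num)
    linarith
  · rw [neg_neg]
    exact Real.rpow_logb (by norm_num) (by norm_num) hθ0

section Iter

variable (hmono : MonotoneOn p (Set.Ioc 0 1))
    (hp1 : ∀ x ∈ Set.Ioc (0:ℝ) 1, 1 ≤ p x)
    {C : ℝ} (hC1 : 1 ≤ C)
    (hC : ∀ a ∈ Set.Ioo (0:ℝ) 1,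
      (∫ x in Set.Ioc a 1, x ^ (-(1 - 1 / p x)) / x) ≤ C * a ^ (-(1 - 1 / p a)))

include hmono hp1 hC1 hC

lemma small_case {t₁ t₂ : ℝ} (ht1 : 0 < t₁) (h12 : t₁ ≤ t₂) (ht2 : 2 * t₂ ≤ 1) :
    t₂ ^ (-(1 - 1 / p t₂) + -Real.logb 2 (1 - 1/(4*C))) ≤
      (4 * C * 2 ^ (-Real.logb 2 (1 - 1/(4*C))))
        * t₁ ^ (-(1 - 1 / p t₁) + -Real.logb 2 (1 - 1/(4*C))) := by
  obtain ⟨hθa, hθb, hεpos, hε1, hθε⟩ := theta_facts hC1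
  set θ := 1 - 1/(4*C) with hθdef
  set ε := -Real.logb 2 θ with hεdef
  have ht2pos : 0 < t₂ := ht1.trans_le h12
  have ht2lt : t₂ < 1 := by linarith
  have ht1lt : t₁ < 1 := lt_of_le_of_lt h12 ht2lt
  have hCpos : (0:ℝ) < C := by linarith
  set k := ⌊Real.logb 2 (t₂/t₁)⌋₊ with hkdef
  have hdiv : (1:ℝ) ≤ t₂/t₁ := (one_le_div ht1).mpr h12
  have hdivpos : (0:ℝ) < t₂/t₁ := by linarith
  have hlog0 : 0 ≤ Real.logb 2 (t₂/t₁) := Real.logb_nonneg (by norm_num) hdiv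
  have h2k_le : (2:ℝ)^k ≤ t₂/t₁ := by
    calc (2:ℝ)^k = (2:ℝ) ^ ((k:ℝ)) := (Real.rpow_natCast 2 k).symm
      _ ≤ (2:ℝ) ^ Real.logb 2 (t₂/t₁) :=
          Real.rpow_le_rpow_of_exponent_le (by norm_num) (Nat.floor_le hlog0)
      _ = t₂/t₁ := Real.rpow_logb (by norm_num) (by norm_num) hdivpos
  have h2k_ge : t₂/t₁ < 2 * (2:ℝ)^k := by
    have hfl := Nat.lt_floor_add_one (Real.logb 2 (t₂/t₁))
    calc t₂/t₁ = (2:ℝ) ^ Real.logb 2 (t₂/t₁) :=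
          (Real.rpow_logb (by norm_num) (by norm_num) hdivpos).symm
      _ < (2:ℝ) ^ ((k:ℝ) + 1) :=
          Real.rpow_lt_rpow_of_exponent_lt (by norm_num) (by exact_mod_cast hfl)
      _ = 2 * (2:ℝ)^k := by
          rw [Real.rpow_add (by norm_num), Real.rpow_one, Real.rpow_natCast]; ring
  have h2kpos : (0:ℝ) < 2^k := by positivity
  have ha2k : 2^k * t₁ ≤ t₂ := by
    rw [← le_div_iff₀ ht1] at *; exact h2k_le
  have h2k1 : (2:ℝ)^k * t₁ ≤ 1 := ha2k.trans (by linarith)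
  -- chain of integral inequalities
  have hA : t₂ ^ (-(1 - 1 / p t₂)) ≤ 4 * ∫ x in Set.Ioc t₂ 1, x ^ (-(1 - 1 / p x)) / x := by
    have h1 := lower_bound hmono hp1 ht2pos ht2
    have h2 := integral_subset_le hmono hp1 ht2pos
      (Set.Ioc_subset_Ioc_right (by linarith : 2 * t₂ ≤ 1))
    linarith
  have hB : (∫ x in Set.Ioc t₂ 1, x ^ (-(1 - 1 / p x)) / x)
      ≤ ∫ x in Set.Ioc ((2:ℝ)^k * t₁) 1, x ^ (-(1 - 1 / p x)) / x :=
    integral_subset_le hmono hp1 (by positivity) (Set.Ioc_subset_Ioc_left ha2k)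
  have hD := iter_lemma hmono hp1 hC1 hC k ht1 h2k1
  have hE := hC t₁ ⟨ht1, ht1lt⟩
  have hθk0 : (0:ℝ) ≤ θ ^ k := by positivity
  have hchain : t₂ ^ (-(1 - 1 / p t₂)) ≤ 4 * C * (θ ^ k * t₁ ^ (-(1 - 1 / p t₁))) := by
    have c1 : (∫ x in Set.Ioc ((2:ℝ)^k * t₁) 1, x ^ (-(1 - 1 / p x)) / x)
        ≤ θ ^ k * (C * t₁ ^ (-(1 - 1 / p t₁))) := by
      refine hD.trans (mul_le_mul_of_nonneg_left hE hθk0)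
    calc t₂ ^ (-(1 - 1 / p t₂))
        ≤ 4 * ∫ x in Set.Ioc t₂ 1, x ^ (-(1 - 1 / p x)) / x := hA
      _ ≤ 4 * ∫ x in Set.Ioc ((2:ℝ)^k * t₁) 1, x ^ (-(1 - 1 / p x)) / x := by linarith
      _ ≤ 4 * (θ ^ k * (C * t₁ ^ (-(1 - 1 / p t₁)))) := by linarith
      _ = 4 * C * (θ ^ k * t₁ ^ (-(1 - 1 / p t₁))) := by ring
  -- θ^k ≤ (t₂/(2t₁))^(-ε)
  have hEε : θ ^ k ≤ (t₂/(2*t₁)) ^ (-ε) := by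
    have e1 : θ ^ k = ((2:ℝ)^k) ^ (-ε) := by
      rw [← hθε]
      rw [← Real.rpow_natCast ((2:ℝ) ^ (-ε)) k, ← Real.rpow_natCast (2:ℝ) k,
        ← Real.rpow_mul (by norm_num), ← Real.rpow_mul (by norm_num)]
      ring_nf
    rw [e1]
    apply Real.rpow_le_rpow_of_nonpos (by positivity) _ (by linarith)
    rw [div_le_iff₀ (by linarith : (0:ℝ) < 2 * t₁)]
    calc t₂ = (t₂ / t₁) * t₁ := by field_simp
      _ ≤ (2 * 2^k) * t₁ := mul_le_mul_of_nonneg_right h2k_ge.le ht1.le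
      _ = 2^k * (2 * t₁) := by ring
  have h2t1 : (0:ℝ) < 2 * t₁ := by linarith
  have hF : (t₂/(2*t₁)) ^ (-ε) = 2 ^ ε * t₁ ^ ε * (t₂ ^ ε)⁻¹ := by
    rw [Real.rpow_neg (div_pos ht2pos h2t1).le, Real.div_rpow ht2pos.le h2t1.le,
      Real.mul_rpow (by norm_num : (0:ℝ) ≤ 2) ht1.le]
    have e1 : (0:ℝ) < t₂ ^ ε := Real.rpow_pos_of_pos ht2pos _
    have e2 : (0:ℝ) < (2:ℝ) ^ ε := Real.rpow_pos_of_pos (by norm_num) _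
    have e3 : (0:ℝ) < t₁ ^ ε := Real.rpow_pos_of_pos ht1 _
    field_simp
  have ht1b : (0:ℝ) ≤ t₁ ^ (-(1 - 1/p t₁)) := Real.rpow_nonneg ht1.le _
  have hfinal : t₂ ^ (-(1 - 1 / p t₂)) ≤
      (4*C*2^ε) * t₁ ^ (-(1 - 1 / p t₁)) * t₁ ^ ε * (t₂ ^ ε)⁻¹ := by
    calc t₂ ^ (-(1 - 1 / p t₂)) ≤ 4*C*(θ^k * t₁ ^ (-(1 - 1 / p t₁))) := hchain
      _ ≤ 4*C*((t₂/(2*t₁))^(-ε) * t₁ ^ (-(1 - 1 / p t₁))) := by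
          apply mul_le_mul_of_nonneg_left (mul_le_mul_of_nonneg_right hEε ht1b)
            (by positivity)
      _ = (4*C*2^ε) * t₁ ^ (-(1 - 1 / p t₁)) * t₁ ^ ε * (t₂ ^ ε)⁻¹ := by
          rw [hF]; ring
  have hXpos : (0:ℝ) < t₂ ^ ε := Real.rpow_pos_of_pos ht2pos _
  rw [Real.rpow_add ht2pos, Real.rpow_add ht1]
  calc t₂ ^ (-(1 - 1 / p t₂)) * t₂ ^ ε
      ≤ ((4*C*2^ε) * t₁ ^ (-(1 - 1 / p t₁)) * t₁ ^ ε * (t₂ ^ ε)⁻¹) * t₂ ^ ε :=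
        mul_le_mul_of_nonneg_right hfinal hXpos.le
    _ = (4 * C * 2 ^ ε) * (t₁ ^ (-(1 - 1 / p t₁)) * t₁ ^ ε) := by
        field_simp

end Iter

end Stmt19

/-- Equivalence of conditions 2) and 3) of Theorem 2.2: the Zygmund-type
integral condition for `x^{-1/p'(x)}` holds iff `x^{-1/p'(x)+ε}` is almost
decreasing for some `ε > 0`. -/
theorem stmt_19 (p : ℝ → ℝ)
    (hmono : MonotoneOn p (Set.Ioc 0 1))
    (hp1 : ∀ x ∈ Set.Ioc (0:ℝ) 1, 1 ≤ p x) :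
    (∃ C > 0, ∀ a ∈ Set.Ioo (0:ℝ) 1,
      ∫ x in Set.Ioc a 1, x ^ (-(1 - 1 / p x)) / x ≤ C * a ^ (-(1 - 1 / p a)))
    ↔
    (∃ ε > 0, ∃ C₁ > 0, ∀ t₁ t₂ : ℝ, 0 < t₁ → t₁ ≤ t₂ → t₂ < 1 →
      t₂ ^ (-(1 - 1 / p t₂) + ε) ≤ C₁ * t₁ ^ (-(1 - 1 / p t₁) + ε)) := by
  constructor
  · rintro ⟨C0, hC0pos, hC0⟩
    set C := max C0 1 with hCdef
    have hC1 : 1 ≤ C := le_max_right _ _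
    have hC : ∀ a ∈ Set.Ioo (0:ℝ) 1,
        (∫ x in Set.Ioc a 1, x ^ (-(1 - 1 / p x)) / x) ≤ C * a ^ (-(1 - 1 / p a)) :=
      fun a ha => (hC0 a ha).trans
        (mul_le_mul_of_nonneg_right (le_max_left _ _) (Real.rpow_nonneg ha.1.le _))
    obtain ⟨hθa, hθb, hεpos, hε1, hθε⟩ := Stmt19.theta_facts hC1
    set ε := -Real.logb 2 (1 - 1/(4*C)) with hεdef
    set K := 4 * C * (2:ℝ) ^ ε with hKdef
    clear_value C
    clear_value ε
    clear_value K
    have hCpos : (0:ℝ) < C := by linarith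
    have h2ε1 : (1:ℝ) ≤ (2:ℝ) ^ ε := by
      have := Real.rpow_le_rpow_of_exponent_le (x := 2) (by norm_num) hεpos.le
      rwa [Real.rpow_zero] at this
    have hK4 : (4:ℝ) ≤ K := by nlinarith
    have hKpos : (0:ℝ) < K := by linarith
    refine ⟨ε, hεpos, 4 * K, by positivity, ?_⟩
    intro t₁ t₂ ht1 h12 ht2lt
    have ht2pos : 0 < t₂ := ht1.trans_le h12
    have ht1lt : t₁ < 1 := lt_of_le_of_lt h12 ht2lt
    have ht1X : (0:ℝ) ≤ t₁ ^ (-(1 - 1 / p t₁) + ε) := Real.rpow_nonneg ht1.le _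
    by_cases hcase : 2 * t₂ ≤ 1
    · have hsc := Stmt19.small_case hmono hp1 hC1 hC ht1 h12 hcase
      rw [← hεdef, ← hKdef] at hsc
      exact hsc.trans (mul_le_mul_of_nonneg_right (by linarith) ht1X)
    · push_neg at hcase
      have hβ2 := Stmt19.beta_mem hp1 (show t₂ ∈ Set.Ioc (0:ℝ) 1 from ⟨ht2pos, ht2lt.le⟩)
      have upper : t₂ ^ (-(1 - 1 / p t₂) + ε) ≤ 2 := by
        have l1 : t₂ ^ (-(1 - 1 / p t₂) + ε) ≤ t₂ ^ (-1 : ℝ) :=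
          Real.rpow_le_rpow_of_exponent_ge ht2pos ht2lt.le (by linarith [hβ2.2, hεpos])
        rw [Real.rpow_neg_one] at l1
        have : t₂⁻¹ ≤ 2 := by
          rw [inv_le_comm₀ ht2pos (by norm_num)]
          linarith
        linarith
      have half_le : (1/2:ℝ) ≤ (1/2:ℝ) ^ ε := by
        have := Real.rpow_le_rpow_of_exponent_ge (x := 1/2) (by norm_num) (by norm_num) hε1
        rwa [Real.rpow_one] at this
      have lower : 1/(2*K) ≤ t₁ ^ (-(1 - 1 / p t₁) + ε) := by
        by_cases h1 : t₁ ≤ 1/2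
        · have hsc := Stmt19.small_case hmono hp1 hC1 hC ht1 h1 (by norm_num)
          rw [← hεdef, ← hKdef] at hsc
          have hβh := Stmt19.beta_mem hp1 (show (1/2:ℝ) ∈ Set.Ioc (0:ℝ) 1 by norm_num)
          have l2 : (1/2:ℝ) ^ ε ≤ (1/2:ℝ) ^ (-(1 - 1 / p (1/2)) + ε) :=
            Real.rpow_le_rpow_of_exponent_ge (by norm_num) (by norm_num)
              (by linarith [hβh.1, hεpos])
          have hh : (1/2:ℝ) ≤ K * t₁ ^ (-(1 - 1 / p t₁) + ε) := by linarith
          rw [div_le_iff₀ (by positivity)]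
          nlinarith
        · push_neg at h1
          have hβ1 := Stmt19.beta_mem hp1 (show t₁ ∈ Set.Ioc (0:ℝ) 1 from ⟨ht1, ht1lt.le⟩)
          have l1 : t₁ ^ ε ≤ t₁ ^ (-(1 - 1 / p t₁) + ε) :=
            Real.rpow_le_rpow_of_exponent_ge ht1 ht1lt.le (by linarith [hβ1.1])
          have l2 : (1/2:ℝ) ^ ε ≤ t₁ ^ ε :=
            Real.rpow_le_rpow (by norm_num) h1.le hεpos.le
          have l3 : 1/(2*K) ≤ 1/2 := by
            apply one_div_le_one_div_of_le (by norm_num)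
            linarith
          linarith
      have hKne : K ≠ 0 := ne_of_gt hKpos
      calc t₂ ^ (-(1 - 1 / p t₂) + ε) ≤ 2 := upper
        _ = (4*K) * (1/(2*K)) := by field_simp; ring
        _ ≤ (4*K) * t₁ ^ (-(1 - 1 / p t₁) + ε) :=
            mul_le_mul_of_nonneg_left lower (by positivity)
  · rintro ⟨ε, hεpos, C₁, hC₁pos, h⟩
    refine ⟨C₁ / ε, by positivity, ?_⟩
    intro a ha
    have ha0 : (0:ℝ) < a := ha.1
    have ha1 : a < 1 := ha.2
    set g : ℝ → ℝ := fun x => C₁ * a ^ (-(1 - 1 / p a) + ε) * x ^ (-ε - 1) with hgdef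
    have hKa : (0:ℝ) ≤ C₁ * a ^ (-(1 - 1 / p a) + ε) := by positivity
    have hg_int : IntegrableOn g (Set.Ioo a 1) := by
      apply Measure.integrableOn_of_bounded
        (M := C₁ * a ^ (-(1 - 1 / p a) + ε) * a ^ (-ε - 1))
        measure_Ioo_lt_top.ne
        (((measurable_id.pow_const _).const_mul _).aestronglyMeasurable)
      rw [ae_restrict_iff' measurableSet_Ioo]
      refine ae_of_all _ fun x hx => ?_
      have hx0 : 0 < x := ha0.trans hx.1
      have hg0 : 0 ≤ g x := by
        simp only [hgdef]
        positivity
      simp only [id_eq]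
      rw [Real.norm_of_nonneg hg0]
      exact mul_le_mul_of_nonneg_left
        (Real.rpow_le_rpow_of_nonpos ha0 hx.1.le (by linarith)) hKa
    have hf_int : IntegrableOn (fun x => x ^ (-(1 - 1 / p x)) / x) (Set.Ioo a 1) :=
      (Stmt19.integrableOn_f hmono hp1 ha0).mono_set Set.Ioo_subset_Ioc_self
    have hpt : ∀ x ∈ Set.Ioo a 1, x ^ (-(1 - 1 / p x)) / x ≤ g x := by
      intro x hx
      have hx0 : 0 < x := ha0.trans hx.1
      have e1 : x ^ (-(1 - 1 / p x)) / x
          = x ^ (-(1 - 1 / p x) + ε) * x ^ (-ε - 1) := by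
        rw [← Real.rpow_add hx0,
          show (-(1 - 1 / p x) + ε) + (-ε - 1) = -(1 - 1 / p x) - 1 by ring,
          Real.rpow_sub hx0, Real.rpow_one]
      rw [e1]
      exact mul_le_mul_of_nonneg_right (h a x ha0 hx.1.le hx.2)
        (Real.rpow_nonneg hx0.le _)
    have step1 : (∫ x in Set.Ioc a 1, x ^ (-(1 - 1 / p x)) / x)
        ≤ ∫ x in Set.Ioo a 1, g x := by
      rw [integral_Ioc_eq_integral_Ioo]
      exact setIntegral_mono_on hf_int hg_int measurableSet_Ioo hpt
    have hJ : (∫ x in Set.Ioo a 1, x ^ (-ε - 1)) = (a ^ (-ε) - 1) / ε := by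
      rw [← integral_Ioc_eq_integral_Ioo, ← intervalIntegral.integral_of_le ha1.le]
      rw [integral_rpow (Or.inr ⟨by intro hc; nlinarith [hc.symm], by
        rw [Set.uIcc_of_le ha1.le]
        intro hmem
        exact absurd hmem.1 (by linarith)⟩)]
      rw [show -ε - 1 + 1 = -ε by ring, Real.one_rpow]
      rw [show (1 : ℝ) - a ^ (-ε) = -(a ^ (-ε) - 1) by ring,
        show (a ^ (-ε) - 1) / ε = -(a ^ (-ε) - 1) / -ε by rw [neg_div_neg_eq]]
    have step2 : (∫ x in Set.Ioo a 1, g x)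
        = C₁ * a ^ (-(1 - 1 / p a) + ε) * ((a ^ (-ε) - 1) / ε) := by
      simp only [hgdef]
      rw [MeasureTheory.integral_const_mul, hJ]
    have haε1 : (1:ℝ) ≤ a ^ (-ε) := by
      have := Real.rpow_le_rpow_of_exponent_ge ha0 ha1.le
        (by linarith : -ε ≤ (0:ℝ))
      rwa [Real.rpow_zero] at this
    have step3 : C₁ * a ^ (-(1 - 1 / p a) + ε) * ((a ^ (-ε) - 1) / ε)
        ≤ C₁ / ε * a ^ (-(1 - 1 / p a)) := by
      have e1 : a ^ (-(1 - 1 / p a) + ε) * a ^ (-ε) = a ^ (-(1 - 1 / p a)) := by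
        rw [← Real.rpow_add ha0]
        ring_nf
      have hb1 : (a ^ (-ε) - 1) / ε ≤ a ^ (-ε) / ε := by
        gcongr
        linarith
      calc C₁ * a ^ (-(1 - 1 / p a) + ε) * ((a ^ (-ε) - 1) / ε)
          ≤ C₁ * a ^ (-(1 - 1 / p a) + ε) * (a ^ (-ε) / ε) :=
            mul_le_mul_of_nonneg_left hb1 hKa
        _ = C₁ / ε * (a ^ (-(1 - 1 / p a) + ε) * a ^ (-ε)) := by ring
        _ = C₁ / ε * a ^ (-(1 - 1 / p a)) := by rw [e1]
    calc (∫ x in Set.Ioc a 1, x ^ (-(1 - 1 / p x)) / x)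
        ≤ ∫ x in Set.Ioo a 1, g x := step1
      _ = C₁ * a ^ (-(1 - 1 / p a) + ε) * ((a ^ (-ε) - 1) / ε) := step2
      _ ≤ C₁ / ε * a ^ (-(1 - 1 / p a)) := step3
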